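/- Let F be an ABA-free hypergraph on a linearly ordered vertex set S, let F' be a subfamily of F, and suppose F'+ is an extension of F' to an additional vertex v (i.e., F'+ is ABA-free on S ∪ {v} and each hyperedge of F'+ restricted to S gives the corresponding hyperedge of F'). Then F can also be extended to v: there exists an ABA-free hypergraph F+ on S ∪ {v} whose restriction to S is F and which contains F'+ as a subfamily. -/

import Mathlib

/-- A set `G` skips a vertex `a` if `min G < a < max G` and `a ∉ G`. -/
def Skips {α : Type*} [LinearOrder α] (G : Set α) (a : α) : Prop :=
  a ∉ G ∧ (∃ x ∈ G, x < a) ∧ (∃ z ∈ G, a < z)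

/-- A hypergraph (family of sets) on a linearly ordered vertex set is ABA-free if
there are no hyperedges `A, B` and vertices `x < y < z` with `x, z ∈ A \ B` and `y ∈ B \ A`. -/
def ABAFree {α : Type*} [LinearOrder α] (F : Set (Set α)) : Prop :=
  ¬ ∃ A ∈ F, ∃ B ∈ F, ∃ x y z : α, x < y ∧ y < z ∧
      x ∈ A ∧ x ∉ B ∧ z ∈ A ∧ z ∉ B ∧ y ∈ B ∧ y ∉ A

/-- A vertex is unskippable with respect to a family if no member of the family skips it. -/
def Unskippable {α : Type*} [LinearOrder α] (F : Set (Set α)) (a : α) : Prop :=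
  ∀ G ∈ F, ¬ Skips G a

section Helpers

variable {α : Type*} [LinearOrder α]

/-- Two sets are separated if one lies entirely below the other. -/
def SepL (X Y : Set α) : Prop := (∀ x ∈ X, ∀ y ∈ Y, x < y) ∨ (∀ x ∈ X, ∀ y ∈ Y, y < x)

/-- An ABA pattern between two sets. -/
def Pat (X Y : Set α) : Prop := ∃ x y z : α, x < y ∧ y < z ∧
      x ∈ X ∧ x ∉ Y ∧ z ∈ X ∧ z ∉ Y ∧ y ∈ Y ∧ y ∉ X

lemma sepL_symm {X Y : Set α} (h : SepL X Y) : SepL Y X :=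
  h.elim (fun h => Or.inr fun y hy x hx => h x hx y hy)
    (fun h => Or.inl fun y hy x hx => h x hx y hy)

lemma abaFree_iff {F : Set (Set α)} : ABAFree F ↔ ∀ A ∈ F, ∀ B ∈ F, ¬ Pat A B := by
  unfold ABAFree Pat
  push_neg
  constructor
  · intro h A hA B hB x y z hxy hyz hxA hxB hzA hzB hyB; exact h A hA B hB x y z hxy hyz hxA hxB hzA hzB hyB
  · intro h A hA B hB x y z hxy hyz hxA hxB hzA hzB hyB; exact h A hA B hB x y z hxy hyz hxA hxB hzA hzB hyB

lemma pat_sepL {X Y : Set α} (h1 : ¬ Pat X Y) (h2 : ¬ Pat Y X) : SepL (X \ Y) (Y \ X) := by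
  by_contra hs
  unfold SepL at hs
  push_neg at hs
  obtain ⟨⟨x1, hx1, y1, hy1, h11⟩, ⟨x2, hx2, y2, hy2, h22⟩⟩ := hs
  -- h11 : ¬ x1 < y1, h22 : ¬ y2 < x2
  have hne1 : y1 ≠ x1 := fun h => hy1.2 (h ▸ hx1.1)
  have hne2 : x2 ≠ y2 := fun h => hx2.2 (h ▸ hy2.1)
  have hlt1 : y1 < x1 := lt_of_le_of_ne (h11) hne1
  have hlt2 : x2 < y2 := lt_of_le_of_ne (h22) hne2
  rcases lt_trichotomy x2 y1 with h | h | h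
  · exact h1 ⟨x2, y1, x1, h, hlt1, hx2.1, hx2.2, hx1.1, hx1.2, hy1.1, hy1.2⟩
  · exact hx2.2 (h ▸ hy1.1)
  · exact h2 ⟨y1, x2, y2, h, hlt2, hy1.1, hy1.2, hy2.1, hy2.2, hx2.1, hx2.2⟩

lemma sepL_pat {X Y : Set α} (h : SepL (X \ Y) (Y \ X)) : ¬ Pat X Y := by
  rintro ⟨x, y, z, hxy, hyz, hxX, hxY, hzX, hzY, hyY, hyX⟩
  rcases h with h | h
  · exact absurd (h z ⟨hzX, hzY⟩ y ⟨hyY, hyX⟩) (not_lt.mpr hyz.le)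
  · exact absurd (h x ⟨hxX, hxY⟩ y ⟨hyY, hyX⟩) (not_lt.mpr hxy.le)

lemma not_sepL_elim {X Y : Set α} (hd : ∀ x ∈ X, ∀ y ∈ Y, x ≠ y) (h : ¬ SepL X Y) :
    (∃ x ∈ X, ∃ y ∈ Y, y < x) ∧ (∃ x ∈ X, ∃ y ∈ Y, x < y) := by
  unfold SepL at h
  push_neg at h
  obtain ⟨⟨x1, hx1, y1, hy1, h11⟩, ⟨x2, hx2, y2, hy2, h22⟩⟩ := h
  exact ⟨⟨x1, hx1, y1, hy1, lt_of_le_of_ne (h11) (Ne.symm (hd x1 hx1 y1 hy1))⟩,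
    ⟨x2, hx2, y2, hy2, lt_of_le_of_ne (h22) (hd x2 hx2 y2 hy2)⟩⟩

-- set algebra
lemma diff_union_v {A B : Set α} {v : α} (_hvA : v ∉ A) (hvB : v ∉ B) :
    (A ∪ {v}) \ B = (A \ B) ∪ {v} := by
  ext x
  by_cases hx : x = v <;> simp [hx, hvB]

lemma diff_v_right {A B : Set α} {v : α} (hvA : v ∉ A) :
    A \ (B ∪ {v}) = A \ B := by
  ext x
  by_cases hx : x = v <;> simp [hx, hvA]

lemma crux (v : α) (A B C : Set α) (hvA : v ∉ A) (hvB : v ∉ B) (hvC : v ∉ C)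
    (hAB : SepL (A \ B) (B \ A)) (hAC : SepL (A \ C) (C \ A))
    (hBC : SepL ((B \ C) ∪ {v}) (C \ B))
    (h1 : ¬ SepL ((B \ A) ∪ {v}) (A \ B)) (h2 : ¬ SepL ((A \ C) ∪ {v}) (C \ A)) :
    False := by
  have hd1 : ∀ x ∈ (B \ A) ∪ {v}, ∀ y ∈ A \ B, x ≠ y := by
    rintro x (hx | hx) y hy h
    · exact hx.2 (h ▸ hy.1)
    · rw [Set.mem_singleton_iff] at hx; exact hvA (hx ▸ h ▸ hy.1)
  have hd2 : ∀ x ∈ (A \ C) ∪ {v}, ∀ y ∈ C \ A, x ≠ y := by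
    rintro x (hx | hx) y hy h
    · exact hy.2 (h ▸ hx.1)
    · rw [Set.mem_singleton_iff] at hx; exact hvC (hx ▸ h ▸ hy.1)
  obtain ⟨⟨u1, hu1, a1, ha1, hlt1⟩, ⟨u2, hu2, a2, ha2, hlt2⟩⟩ := not_sepL_elim hd1 h1
  obtain ⟨⟨w1, hw1, c1, hc1, hkt1⟩, ⟨w2, hw2, c2, hc2, hkt2⟩⟩ := not_sepL_elim hd2 h2
  -- hlt1 : a1 < u1, hlt2 : u2 < a2, hkt1 : c1 < w1, hkt2 : w2 < c2
  rcases hAB with Hab | Hba <;> rcases hAC with Hac | Hca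
  · -- A\B < B\A , A\C < C\A
    have hu2v : u2 = v := by
      rcases hu2 with hu2 | hu2
      · exact absurd (Hab a2 ha2 u2 hu2) (not_lt.mpr hlt2.le)
      · rwa [Set.mem_singleton_iff] at hu2
    rw [hu2v] at hlt2  -- v < a2
    have hw1v : w1 = v := by
      rcases hw1 with hw1 | hw1
      · exact absurd (Hac w1 hw1 c1 hc1) (not_lt.mpr hkt1.le)
      · rwa [Set.mem_singleton_iff] at hw1
    rw [hw1v] at hkt1  -- c1 < v
    have ha2C : a2 ∈ C := by
      by_contra h
      exact absurd (Hac a2 ⟨ha2.1, h⟩ c1 hc1) (not_lt.mpr (hkt1.trans hlt2).le)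
    have hc1B : c1 ∉ B := by
      intro h
      exact absurd (Hab a2 ha2 c1 ⟨h, hc1.2⟩) (not_lt.mpr (hkt1.trans hlt2).le)
    rcases hBC with O | O
    · exact absurd (O v (Or.inr rfl) c1 ⟨hc1.1, hc1B⟩) (not_lt.mpr hkt1.le)
    · exact absurd (O v (Or.inr rfl) a2 ⟨ha2C, ha2.2⟩) (not_lt.mpr hlt2.le)
  · -- A\B < B\A , C\A < A\C
    have hu2v : u2 = v := by
      rcases hu2 with hu2 | hu2
      · exact absurd (Hab a2 ha2 u2 hu2) (not_lt.mpr hlt2.le)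
      · rwa [Set.mem_singleton_iff] at hu2
    rw [hu2v] at hlt2  -- v < a2
    have hw2v : w2 = v := by
      rcases hw2 with hw2 | hw2
      · exact absurd (Hca w2 hw2 c2 hc2) (not_lt.mpr hkt2.le)
      · rwa [Set.mem_singleton_iff] at hw2
    rw [hw2v] at hkt2  -- v < c2
    rcases hw1 with hw1 | hw1
    · -- w1 ∈ A \ C
      have hc2w1 : c2 < w1 := Hca w1 hw1 c2 hc2
      by_cases hc2B : c2 ∈ B
      · have ha2c2 : a2 < c2 := Hab a2 ha2 c2 ⟨hc2B, hc2.2⟩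
        by_cases ha2C : a2 ∈ C
        · rcases hBC with O | O
          · by_cases hw1B : w1 ∈ B
            · exact absurd (O w1 (Or.inl ⟨hw1B, hw1.2⟩) a2 ⟨ha2C, ha2.2⟩)
                (not_lt.mpr (ha2c2.trans hc2w1).le)
            · exact absurd (Hab w1 ⟨hw1.1, hw1B⟩ c2 ⟨hc2B, hc2.2⟩) (not_lt.mpr hc2w1.le)
          · exact absurd (O v (Or.inr rfl) a2 ⟨ha2C, ha2.2⟩) (not_lt.mpr hlt2.le)
        · exact absurd (Hca a2 ⟨ha2.1, ha2C⟩ c2 hc2) (not_lt.mpr ha2c2.le)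
      · -- c2 ∈ C\B, v < c2
        rcases hBC with O | O
        · by_cases hw1B : w1 ∈ B
          · exact absurd (O w1 (Or.inl ⟨hw1B, hw1.2⟩) c2 ⟨hc2.1, hc2B⟩) (not_lt.mpr hc2w1.le)
          · -- w1 ∈ A\B ; use (u1, a1)
            rcases hu1 with hu1 | hu1
            · by_cases hbC : u1 ∈ C
              · exact absurd (Hca w1 hw1 u1 ⟨hbC, hu1.2⟩)
                  (not_lt.mpr (Hab w1 ⟨hw1.1, hw1B⟩ u1 hu1).le)
              · have h1' : u1 < c2 := O u1 (Or.inl ⟨hu1.1, hbC⟩) c2 ⟨hc2.1, hc2B⟩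
                have h2' : w1 < u1 := Hab w1 ⟨hw1.1, hw1B⟩ u1 hu1
                exact absurd (h2'.trans h1') (not_lt.mpr hc2w1.le)
            · rw [Set.mem_singleton_iff] at hu1
              rw [hu1] at hlt1  -- a1 < v
              by_cases ha1C : a1 ∈ C
              · exact absurd (O v (Or.inr rfl) a1 ⟨ha1C, ha1.2⟩) (not_lt.mpr hlt1.le)
              · exact absurd (Hca a1 ⟨ha1.1, ha1C⟩ c2 hc2)
                  (not_lt.mpr (hlt1.trans hkt2).le)
        · exact absurd (O v (Or.inr rfl) c2 ⟨hc2.1, hc2B⟩) (not_lt.mpr hkt2.le)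
    · rw [Set.mem_singleton_iff] at hw1
      rw [hw1] at hkt1  -- c1 < v
      have hc1B : c1 ∉ B := by
        intro h
        exact absurd (Hab a2 ha2 c1 ⟨h, hc1.2⟩) (not_lt.mpr (hkt1.trans hlt2).le)
      rcases hBC with O | O
      · exact absurd (O v (Or.inr rfl) c1 ⟨hc1.1, hc1B⟩) (not_lt.mpr hkt1.le)
      · have hc2B : c2 ∈ B := by
          by_contra h
          exact absurd (O v (Or.inr rfl) c2 ⟨hc2.1, h⟩) (not_lt.mpr hkt2.le)
        have ha2c2 : a2 < c2 := Hab a2 ha2 c2 ⟨hc2B, hc2.2⟩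
        by_cases ha2C : a2 ∈ C
        · exact absurd (O v (Or.inr rfl) a2 ⟨ha2C, ha2.2⟩) (not_lt.mpr hlt2.le)
        · exact absurd (Hca a2 ⟨ha2.1, ha2C⟩ c2 hc2) (not_lt.mpr ha2c2.le)
  · -- B\A < A\B , A\C < C\A
    have hu1v : u1 = v := by
      rcases hu1 with hu1 | hu1
      · exact absurd (Hba a1 ha1 u1 hu1) (not_lt.mpr hlt1.le)
      · rwa [Set.mem_singleton_iff] at hu1
    rw [hu1v] at hlt1  -- a1 < v
    have hw1v : w1 = v := by
      rcases hw1 with hw1 | hw1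
      · exact absurd (Hac w1 hw1 c1 hc1) (not_lt.mpr hkt1.le)
      · rwa [Set.mem_singleton_iff] at hw1
    rw [hw1v] at hkt1  -- c1 < v
    rcases hw2 with hw2 | hw2
    · -- w2 ∈ A \ C
      have hw2c1 : w2 < c1 := Hac w2 hw2 c1 hc1
      by_cases hc1B : c1 ∈ B
      · have hc1a1 : c1 < a1 := Hba a1 ha1 c1 ⟨hc1B, hc1.2⟩
        by_cases ha1C : a1 ∈ C
        · rcases hBC with O | O
          · exact absurd (O v (Or.inr rfl) a1 ⟨ha1C, ha1.2⟩) (not_lt.mpr hlt1.le)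
          · by_cases hw2B : w2 ∈ B
            · exact absurd (O w2 (Or.inl ⟨hw2B, hw2.2⟩) a1 ⟨ha1C, ha1.2⟩)
                (not_lt.mpr (hw2c1.trans hc1a1).le)
            · exact absurd (Hba w2 ⟨hw2.1, hw2B⟩ c1 ⟨hc1B, hc1.2⟩) (not_lt.mpr hw2c1.le)
        · exact absurd (Hac a1 ⟨ha1.1, ha1C⟩ c1 hc1) (not_lt.mpr hc1a1.le)
      · -- c1 ∈ C\B, c1 < v
        rcases hBC with O | O
        · exact absurd (O v (Or.inr rfl) c1 ⟨hc1.1, hc1B⟩) (not_lt.mpr hkt1.le)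
        · by_cases hw2B : w2 ∈ B
          · exact absurd (O w2 (Or.inl ⟨hw2B, hw2.2⟩) c1 ⟨hc1.1, hc1B⟩) (not_lt.mpr hw2c1.le)
          · -- w2 ∈ A\B ; use (u2, a2)
            rcases hu2 with hu2 | hu2
            · by_cases hbC : u2 ∈ C
              · exact absurd (Hac w2 hw2 u2 ⟨hbC, hu2.2⟩)
                  (not_lt.mpr (Hba w2 ⟨hw2.1, hw2B⟩ u2 hu2).le)
              · have h1' : c1 < u2 := O u2 (Or.inl ⟨hu2.1, hbC⟩) c1 ⟨hc1.1, hc1B⟩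
                have h2' : u2 < w2 := Hba w2 ⟨hw2.1, hw2B⟩ u2 hu2
                exact absurd (h1'.trans h2') (not_lt.mpr hw2c1.le)
            · rw [Set.mem_singleton_iff] at hu2
              rw [hu2] at hlt2  -- v < a2
              by_cases ha2C : a2 ∈ C
              · exact absurd (O v (Or.inr rfl) a2 ⟨ha2C, ha2.2⟩) (not_lt.mpr hlt2.le)
              · exact absurd (Hac a2 ⟨ha2.1, ha2C⟩ c1 hc1)
                  (not_lt.mpr (hkt1.trans hlt2).le)
    · rw [Set.mem_singleton_iff] at hw2
      rw [hw2] at hkt2  -- v < c2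
      have hc2B : c2 ∉ B := by
        intro h
        exact absurd (Hba a1 ha1 c2 ⟨h, hc2.2⟩) (not_lt.mpr (hlt1.trans hkt2).le)
      rcases hBC with O | O
      · have hc1B : c1 ∈ B := by
          by_contra h
          exact absurd (O v (Or.inr rfl) c1 ⟨hc1.1, h⟩) (not_lt.mpr hkt1.le)
        have hc1a1 : c1 < a1 := Hba a1 ha1 c1 ⟨hc1B, hc1.2⟩
        by_cases ha1C : a1 ∈ C
        · exact absurd (O v (Or.inr rfl) a1 ⟨ha1C, ha1.2⟩) (not_lt.mpr hlt1.le)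
        · exact absurd (Hac a1 ⟨ha1.1, ha1C⟩ c1 hc1) (not_lt.mpr hc1a1.le)
      · exact absurd (O v (Or.inr rfl) c2 ⟨hc2.1, hc2B⟩) (not_lt.mpr hkt2.le)
  · -- B\A < A\B , C\A < A\C
    have hu1v : u1 = v := by
      rcases hu1 with hu1 | hu1
      · exact absurd (Hba a1 ha1 u1 hu1) (not_lt.mpr hlt1.le)
      · rwa [Set.mem_singleton_iff] at hu1
    rw [hu1v] at hlt1  -- a1 < v
    have hw2v : w2 = v := by
      rcases hw2 with hw2 | hw2
      · exact absurd (Hca w2 hw2 c2 hc2) (not_lt.mpr hkt2.le)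
      · rwa [Set.mem_singleton_iff] at hw2
    rw [hw2v] at hkt2  -- v < c2
    have ha1C : a1 ∈ C := by
      by_contra h
      exact absurd (Hca a1 ⟨ha1.1, h⟩ c2 hc2) (not_lt.mpr (hlt1.trans hkt2).le)
    have hc2B : c2 ∉ B := by
      intro h
      exact absurd (Hba a1 ha1 c2 ⟨h, hc2.2⟩) (not_lt.mpr (hlt1.trans hkt2).le)
    rcases hBC with O | O
    · exact absurd (O v (Or.inr rfl) a1 ⟨ha1C, ha1.2⟩) (not_lt.mpr hlt1.le)
    · exact absurd (O v (Or.inr rfl) c2 ⟨hc2.1, hc2B⟩) (not_lt.mpr hkt2.le)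

lemma diff_vv {A B : Set α} {v : α} (hvA : v ∉ A) :
    (A ∪ {v}) \ (B ∪ {v}) = A \ B := by
  ext x
  by_cases hx : x = v <;> simp [hx, hvA]

lemma gB_eq_with {S : Set α} {v : α} (hv : v ∉ S) {gB B : Set α}
    (h1 : gB ∩ S = B) (h2 : gB ⊆ insert v S) (hm : v ∈ gB) : gB = B ∪ {v} := by
  ext x
  simp only [Set.mem_union, Set.mem_singleton_iff]
  constructor
  · intro hx
    rcases Set.mem_insert_iff.mp (h2 hx) with h | h
    · exact Or.inr h
    · exact Or.inl (by rw [← h1]; exact ⟨hx, h⟩)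
  · rintro (hx | rfl)
    · rw [← h1] at hx; exact hx.1
    · exact hm

lemma gB_eq_without {S : Set α} {v : α} (hv : v ∉ S) {gB B : Set α}
    (h1 : gB ∩ S = B) (h2 : gB ⊆ insert v S) (hm : v ∉ gB) : gB = B := by
  ext x
  constructor
  · intro hx
    rcases Set.mem_insert_iff.mp (h2 hx) with h | h
    · exact absurd (h ▸ hx) hm
    · rw [← h1]; exact ⟨hx, h⟩
  · intro hx
    rw [← h1] at hx; exact hx.1

lemma insert_free {e : Set α} {G : Set (Set α)} (hG : ABAFree G)
    (h : ∀ X ∈ G, SepL (e \ X) (X \ e)) : ABAFree (insert e G) := by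
  rw [abaFree_iff]
  rintro X (rfl | hX) Y (rfl | hY)
  · rintro ⟨x, y, z, _, _, hx1, hx2, -⟩; exact hx2 hx1
  · exact sepL_pat (h Y hY)
  · exact sepL_pat (sepL_symm (h X hX))
  · exact abaFree_iff.mp hG X hX Y hY

lemma step (S : Set α) (v : α) (hv : v ∉ S) (F' : Set (Set α)) (A : Set α)
    (hA : A ⊆ S) (hFS : ∀ B ∈ F', B ⊆ S)
    (hsep : ∀ B ∈ F', SepL (A \ B) (B \ A))
    (g : Set α → Set α) (hg1 : ∀ B ∈ F', g B ∩ S = B) (hg2 : ∀ B ∈ F', g B ⊆ insert v S)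
    (hgABA : ABAFree (g '' F')) :
    ∃ e : Set α, e ∩ S = A ∧ e ⊆ insert v S ∧ ABAFree (insert e (g '' F')) := by
  classical
  have hvA : v ∉ A := fun h => hv (hA h)
  have hvB : ∀ B ∈ F', v ∉ B := fun B hB h => hv (hFS B hB h)
  have hgpat : ∀ B ∈ F', ∀ B' ∈ F', ¬ Pat (g B) (g B') := fun B hB B' hB' =>
    (abaFree_iff.mp hgABA) (g B) ⟨B, hB, rfl⟩ (g B') ⟨B', hB', rfl⟩
  have himg : ∀ X ∈ g '' F', ∃ B ∈ F', X = g B := by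
    rintro X ⟨B, hB, rfl⟩; exact ⟨B, hB, rfl⟩
  by_cases hforced : ∃ B ∈ F', v ∈ g B ∧ ¬ SepL ((B \ A) ∪ {v}) (A \ B)
  · obtain ⟨B₀, hB₀, hvB₀, hns⟩ := hforced
    refine ⟨A ∪ {v}, ?_, ?_, ?_⟩
    · rw [Set.union_inter_distrib_right, Set.inter_eq_self_of_subset_left hA,
        Set.singleton_inter_eq_empty.mpr hv, Set.union_empty]
    · exact Set.union_subset (hA.trans (Set.subset_insert v S)) (by simp)
    · refine insert_free hgABA ?_
      rintro X ⟨B, hB, rfl⟩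
      by_cases hvgB : v ∈ g B
      · rw [gB_eq_with hv (hg1 B hB) (hg2 B hB) hvgB, diff_vv hvA, diff_vv (hvB B hB)]
        exact hsep B hB
      · rw [gB_eq_without hv (hg1 B hB) (hg2 B hB) hvgB, diff_union_v hvA (hvB B hB),
          diff_v_right (hvB B hB)]
        by_contra h2
        have hBC : SepL ((B₀ \ B) ∪ {v}) (B \ B₀) := by
          have := pat_sepL (hgpat B₀ hB₀ B hB) (hgpat B hB B₀ hB₀)
          rwa [gB_eq_with hv (hg1 B₀ hB₀) (hg2 B₀ hB₀) hvB₀,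
            gB_eq_without hv (hg1 B hB) (hg2 B hB) hvgB,
            diff_union_v (hvB B₀ hB₀) (hvB B hB), diff_v_right (hvB B hB)] at this
        exact crux v A B₀ B hvA (hvB B₀ hB₀) (hvB B hB) (hsep B₀ hB₀) (hsep B hB) hBC hns h2
  · push_neg at hforced
    refine ⟨A, Set.inter_eq_self_of_subset_left hA, hA.trans (Set.subset_insert v S), ?_⟩
    refine insert_free hgABA ?_
    rintro X ⟨B, hB, rfl⟩
    by_cases hvgB : v ∈ g B
    · rw [gB_eq_with hv (hg1 B hB) (hg2 B hB) hvgB, diff_v_right hvA,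
        diff_union_v (hvB B hB) hvA]
      exact sepL_symm (hforced B hB hvgB)
    · rw [gB_eq_without hv (hg1 B hB) (hg2 B hB) hvgB]
      exact hsep B hB

lemma ext_aux (S : Set α) (v : α) (hv : v ∉ S) (F : Set (Set α)) (hFfin : F.Finite)
    (hFS : ∀ A ∈ F, A ⊆ S) (hABA : ABAFree F) :
    ∀ n : ℕ, ∀ F' : Set (Set α), F' ⊆ F → ∀ g : Set α → Set α,
      (F \ F').ncard ≤ n →
      (∀ A ∈ F', g A ∩ S = A) → (∀ A ∈ F', g A ⊆ insert v S) → ABAFree (g '' F') →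
      ∃ g', (∀ A ∈ F', g' A = g A) ∧ (∀ A ∈ F, g' A ∩ S = A) ∧
        (∀ A ∈ F, g' A ⊆ insert v S) ∧ ABAFree (g' '' F) := by
  intro n
  induction n with
  | zero =>
    intro F' hsub g hcard hg1 hg2 hgABA
    have hdiff : F \ F' = ∅ :=
      (Set.ncard_eq_zero (hFfin.diff : (F \ F').Finite)).mp (Nat.le_zero.mp hcard)
    have hFeq : F = F' := Set.Subset.antisymm (Set.diff_eq_empty.mp hdiff) hsub
    exact ⟨g, fun A _ => rfl, fun A hA => hg1 A (hFeq ▸ hA),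
      fun A hA => hg2 A (hFeq ▸ hA), hFeq ▸ hgABA⟩
  | succ n ih =>
    intro F' hsub g hcard hg1 hg2 hgABA
    by_cases hFF : F ⊆ F'
    · have hFeq : F = F' := Set.Subset.antisymm hFF hsub
      exact ⟨g, fun A _ => rfl, fun A hA => hg1 A (hFeq ▸ hA),
        fun A hA => hg2 A (hFeq ▸ hA), hFeq ▸ hgABA⟩
    · obtain ⟨A, hAF, hAF'⟩ := Set.not_subset.mp hFF
      have hsepA : ∀ B ∈ F', SepL (A \ B) (B \ A) := fun B hB =>
        pat_sepL (abaFree_iff.mp hABA A hAF B (hsub hB))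
          (abaFree_iff.mp hABA B (hsub hB) A hAF)
      obtain ⟨e, he1, he2, he3⟩ := step S v hv F' A (hFS A hAF)
        (fun B hB => hFS B (hsub hB)) hsepA g hg1 hg2 hgABA
      classical
      set g₂ := Function.update g A e with hg₂def
      have hg₂A : g₂ A = e := Function.update_self A e g
      have hg₂B : ∀ B ∈ F', g₂ B = g B := by
        intro B hB
        have hne : B ≠ A := fun h => hAF' (by rwa [h] at hB)
        exact Function.update_of_ne hne e g
      have himg : g₂ '' (insert A F') = insert e (g '' F') := by
        rw [Set.image_insert_eq, hg₂A]
        congr 1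
        exact Set.image_congr hg₂B
      have hcard' : (F \ insert A F').ncard ≤ n := by
        have hEq : F \ insert A F' = (F \ F') \ {A} := by
          ext x
          simp only [Set.mem_diff, Set.mem_insert_iff, Set.mem_singleton_iff]
          tauto
        have hlt : ((F \ F') \ {A}).ncard < (F \ F').ncard :=
          Set.ncard_diff_singleton_lt_of_mem ⟨hAF, hAF'⟩ (hFfin.diff : (F \ F').Finite)
        rw [hEq]
        omega
      obtain ⟨g', hp1, hp2, hp3, hp4⟩ := ih (insert A F')
        (Set.insert_subset hAF hsub) g₂ hcard'
        (by
          rintro B (rfl | hB)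
          · rw [hg₂A]; exact he1
          · rw [hg₂B B hB]; exact hg1 B hB)
        (by
          rintro B (rfl | hB)
          · rw [hg₂A]; exact he2
          · rw [hg₂B B hB]; exact hg2 B hB)
        (by rw [himg]; exact he3)
      exact ⟨g', fun B hB => (hp1 B (Set.mem_insert_of_mem A hB)).trans (hg₂B B hB),
        hp2, hp3, hp4⟩

end Helpers

/-- Extension with a vertex: if a subfamily `F'` of the ABA-free hypergraph `F` (all
hyperedges contained in `S`) admits an ABA-free extension `g` to the additional vertex
`v ∉ S`, then all of `F` can be extended to `v` compatibly. -/
theorem extension_with_vertex {α : Type*} [LinearOrder α] [Fintype α]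
    (S : Set α) (v : α) (hv : v ∉ S)
    (F F' : Set (Set α)) (hsub : F' ⊆ F) (hFS : ∀ A ∈ F, A ⊆ S)
    (hABA : ABAFree F)
    (g : Set α → Set α)
    (hg1 : ∀ A ∈ F', g A ∩ S = A) (hg2 : ∀ A ∈ F', g A ⊆ insert v S)
    (hgABA : ABAFree (g '' F')) :
    ∃ g' : Set α → Set α,
      (∀ A ∈ F', g' A = g A) ∧
      (∀ A ∈ F, g' A ∩ S = A) ∧
      (∀ A ∈ F, g' A ⊆ insert v S) ∧
      ABAFree (g' '' F) := by
  exact ext_aux S v hv F (Set.toFinite F) hFS hABA (F \ F').ncard F' hsub g le_rfl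
    hg1 hg2 hgABA
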